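/- The map sending x to the sequence (Λ_n(x))_{n∈ℕ} restricts to a bijection from cs^λ onto cs, from cs₀^λ onto cs₀, and from bs^λ onto bs; moreover for every x ∈ bs^λ one has ‖x‖_{bs^λ} = sup_m |∑_{n=0}^m Λ_n(x)|, i.e. the bs-norm of its image. In particular cs^λ, cs₀^λ and bs^λ are linearly isometric to cs, cs₀ and bs, respectively. -/

import Mathlib

open Filter Topology

/-- `dl l k = λ_k - λ_{k-1}` with the convention `λ_{-1} = 0`. -/
noncomputable def dl (l : ℕ → ℝ) (k : ℕ) : ℝ := l k - (if k = 0 then 0 else l (k - 1))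

/-- `LamT l x n = Λ_n(x) = (1/λ_n) ∑_{k=0}^n (λ_k - λ_{k-1}) x_k`. -/
noncomputable def LamT (l : ℕ → ℝ) (x : ℕ → ℂ) (n : ℕ) : ℂ :=
  (1 / (l n : ℂ)) * ∑ k ∈ Finset.range (n + 1), ((dl l k : ℝ) : ℂ) * x k

/-- `cs`: sequences with convergent partial sums. -/
def csSet : Set (ℕ → ℂ) :=
  {y | ∃ L, Tendsto (fun m => ∑ k ∈ Finset.range (m + 1), y k) atTop (𝓝 L)}

/-- `cs₀`: sequences whose partial sums tend to `0`. -/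
def cs0Set : Set (ℕ → ℂ) :=
  {y | Tendsto (fun m => ∑ k ∈ Finset.range (m + 1), y k) atTop (𝓝 0)}

/-- `bs`: sequences with bounded partial sums. -/
def bsSet : Set (ℕ → ℂ) :=
  {y | ∃ C, ∀ m, ‖∑ k ∈ Finset.range (m + 1), y k‖ ≤ C}

/-- The `bs`-norm: `sup_m |∑_{k=0}^m y_k|`. -/
noncomputable def bsNorm (y : ℕ → ℂ) : ℝ := ⨆ m, ‖∑ k ∈ Finset.range (m + 1), y k‖

/-- `cs^λ = {x : Λx ∈ cs}`. -/
def csLam (l : ℕ → ℝ) : Set (ℕ → ℂ) := {x | LamT l x ∈ csSet}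

/-- `cs₀^λ = {x : Λx ∈ cs₀}`. -/
def cs0Lam (l : ℕ → ℝ) : Set (ℕ → ℂ) := {x | LamT l x ∈ cs0Set}

/-- `bs^λ = {x : Λx ∈ bs}`. -/
def bsLam (l : ℕ → ℝ) : Set (ℕ → ℂ) := {x | LamT l x ∈ bsSet}

/-- The norm on `bs^λ` (also used on `cs^λ` and `cs₀^λ`):
`‖x‖_{bs^λ} = sup_m |∑_{n=0}^m Λ_n(x)|`. -/
noncomputable def bsLamNorm (l : ℕ → ℝ) (x : ℕ → ℂ) : ℝ :=
  ⨆ m, ‖∑ n ∈ Finset.range (m + 1), LamT l x n‖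

/-- Inverse transform. -/
noncomputable def invT (l : ℕ → ℝ) (y : ℕ → ℂ) (n : ℕ) : ℂ :=
  ((l n : ℂ) * y n - (if n = 0 then 0 else (l (n - 1) : ℂ) * y (n - 1))) / ((dl l n : ℝ) : ℂ)

lemma dl_pos (l : ℕ → ℝ) (hmono : StrictMono l) (hpos : 0 < l 0) (k : ℕ) : 0 < dl l k := by
  cases k with
  | zero => simpa [dl] using hpos
  | succ n => simp only [dl, Nat.succ_ne_zero, if_false, Nat.add_sub_cancel]
              exact sub_pos.mpr (hmono (Nat.lt_succ_self n))

lemma l_pos (l : ℕ → ℝ) (hmono : StrictMono l) (hpos : 0 < l 0) (n : ℕ) : 0 < l n :=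
  hpos.trans_le (hmono.monotone (Nat.zero_le n))

lemma sum_eq (l : ℕ → ℝ) (hmono : StrictMono l) (hpos : 0 < l 0) (x : ℕ → ℂ) (n : ℕ) :
    ∑ k ∈ Finset.range (n + 1), ((dl l k : ℝ) : ℂ) * x k = (l n : ℂ) * LamT l x n := by
  have hl : (l n : ℂ) ≠ 0 := by
    exact_mod_cast (l_pos l hmono hpos n).ne'
  rw [LamT]
  field_simp

lemma left_inv (l : ℕ → ℝ) (hmono : StrictMono l) (hpos : 0 < l 0) (x : ℕ → ℂ) :
    invT l (LamT l x) = x := by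
  funext n
  have hdl : ((dl l n : ℝ) : ℂ) ≠ 0 := by
    exact_mod_cast (dl_pos l hmono hpos n).ne'
  cases n with
  | zero =>
    rw [invT]
    try simp only [if_pos rfl, sub_zero, eq_self_iff_true, reduceIte]
    rw [← sum_eq l hmono hpos x 0]
    simp only [zero_add, Finset.sum_range_one]
    field_simp
  | succ m =>
    rw [invT]
    simp only [Nat.succ_ne_zero, if_false, Nat.add_sub_cancel]
    rw [← sum_eq l hmono hpos x (m + 1), ← sum_eq l hmono hpos x m,
      Finset.sum_range_succ _ (m + 1)]
    field_simp
    ring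

lemma right_inv (l : ℕ → ℝ) (hmono : StrictMono l) (hpos : 0 < l 0) (y : ℕ → ℂ) :
    LamT l (invT l y) = y := by
  have hdl : ∀ k, ((dl l k : ℝ) : ℂ) ≠ 0 := fun k => by
    exact_mod_cast (dl_pos l hmono hpos k).ne'
  have key : ∀ n, ∑ k ∈ Finset.range (n + 1), ((dl l k : ℝ) : ℂ) * invT l y k
      = (l n : ℂ) * y n := by
    intro n
    induction n with
    | zero =>
      simp only [zero_add, Finset.sum_range_one, invT, reduceIte, sub_zero]
      rw [mul_div_assoc', mul_div_cancel_left₀ _ (hdl 0)]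
    | succ m ih =>
      rw [Finset.sum_range_succ _ (m + 1), ih, invT]
      simp only [Nat.succ_ne_zero, if_false, Nat.add_sub_cancel]
      rw [mul_div_assoc', mul_div_cancel_left₀ _ (hdl (m + 1))]
      ring
  funext n
  have hl : (l n : ℂ) ≠ 0 := by
    exact_mod_cast (l_pos l hmono hpos n).ne'
  rw [LamT, key n]
  field_simp

lemma bijOn_gen (l : ℕ → ℝ) (hmono : StrictMono l) (hpos : 0 < l 0) (T : Set (ℕ → ℂ)) :
    Set.BijOn (fun x => LamT l x) {x | LamT l x ∈ T} T := by
  refine ⟨fun x hx => hx, ?_, ?_⟩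
  · intro x _ x' _ h
    have h' : LamT l x = LamT l x' := h
    have : invT l (LamT l x) = invT l (LamT l x') := by rw [h']
    rwa [left_inv l hmono hpos, left_inv l hmono hpos] at this
  · intro y hy
    refine ⟨invT l y, ?_, right_inv l hmono hpos y⟩
    show LamT l (invT l y) ∈ T
    rwa [right_inv l hmono hpos]

theorem stmt1 (l : ℕ → ℝ) (hmono : StrictMono l) (hpos : 0 < l 0)
    (hlim : Tendsto l atTop atTop) :
    Set.BijOn (fun x => LamT l x) (csLam l) csSet ∧
    Set.BijOn (fun x => LamT l x) (cs0Lam l) cs0Set ∧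
    Set.BijOn (fun x => LamT l x) (bsLam l) bsSet ∧
    ∀ x ∈ bsLam l, bsLamNorm l x = bsNorm (LamT l x) := by
  exact ⟨bijOn_gen l hmono hpos _, bijOn_gen l hmono hpos _, bijOn_gen l hmono hpos _,
    fun x _ => rfl⟩
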